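/- Stuckness modulo substitution: let N, P be closed terms with P ≲ N. If M[N/z] gets stuck (reduces to a normal form that is not a value), then M[P/z] either diverges or gets stuck. -/

import Mathlib

namespace PCF

/-- Terms of the simple CBV, PCF-like language.  Variables are natural numbers. -/
inductive Tm : Type
  | var : ℕ → Tm
  | zero : Tm
  | succ : Tm → Tm
  | pred : Tm → Tm
  | ifz : Tm → Tm → Tm → Tm
  | abs : ℕ → Tm → Tm
  | app : Tm → Tm → Tm
  | fix : ℕ → Tm → Tm
  | pair : Tm → Tm → Tm
  | lett : ℕ → ℕ → Tm → Tm → Tm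
  deriving DecidableEq

/-- The numeral `succ^n(zero)`. -/
def numeral : ℕ → Tm
  | 0 => .zero
  | n + 1 => .succ (numeral n)

/-- Values. -/
inductive IsValue : Tm → Prop
  | var (x : ℕ) : IsValue (.var x)
  | num (n : ℕ) : IsValue (numeral n)
  | pair {V W : Tm} : IsValue V → IsValue W → IsValue (.pair V W)
  | abs (x : ℕ) (M : Tm) : IsValue (.abs x M)

/-- Capture-permitting substitution `M[N/x]` (adequate since we only ever
substitute closed terms). -/
def subst (x : ℕ) (N : Tm) : Tm → Tm
  | .var y => if y = x then N else .var y
  | .zero => .zero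
  | .succ M => .succ (subst x N M)
  | .pred M => .pred (subst x N M)
  | .ifz M P Q => .ifz (subst x N M) (subst x N P) (subst x N Q)
  | .abs y M => if y = x then .abs y M else .abs y (subst x N M)
  | .app M P => .app (subst x N M) (subst x N P)
  | .fix y M => if y = x then .fix y M else .fix y (subst x N M)
  | .pair M P => .pair (subst x N M) (subst x N P)
  | .lett y z M P =>
      .lett y z (subst x N M) (if y = x ∨ z = x then P else subst x N P)

/-- Free variables. -/
def fv : Tm → Finset ℕ
  | .var y => {y}
  | .zero => ∅
  | .succ M => fv M
  | .pred M => fv M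
  | .ifz M P Q => fv M ∪ fv P ∪ fv Q
  | .abs y M => fv M \ {y}
  | .app M P => fv M ∪ fv P
  | .fix y M => fv M \ {y}
  | .pair M P => fv M ∪ fv P
  | .lett y z M P => fv M ∪ (fv P \ {y, z})

def ClosedTm (M : Tm) : Prop := fv M = ∅

/-- One-step call-by-value reduction (closure of the redex rules under
evaluation contexts). -/
inductive Step : Tm → Tm → Prop
  | ifz_zero {N P : Tm} : Step (.ifz (numeral 0) N P) N
  | ifz_succ {n : ℕ} {N P : Tm} : Step (.ifz (numeral (n + 1)) N P) P
  | lett_beta {x y : ℕ} {V W M : Tm} : IsValue V → IsValue W →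
      Step (.lett x y (.pair V W) M) (subst y W (subst x V M))
  | fix_step {x : ℕ} {M : Tm} : Step (.fix x M) (subst x (.fix x M) M)
  | pred_zero : Step (.pred (numeral 0)) (numeral 0)
  | pred_succ {n : ℕ} : Step (.pred (numeral (n + 1))) (numeral n)
  | beta {x : ℕ} {M V : Tm} : IsValue V → Step (.app (.abs x M) V) (subst x V M)
  | succ_ctx {M M' : Tm} : Step M M' → Step (.succ M) (.succ M')
  | pred_ctx {M M' : Tm} : Step M M' → Step (.pred M) (.pred M')
  | pair_left {M M' N : Tm} : Step M M' → Step (.pair M N) (.pair M' N)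
  | pair_right {V N N' : Tm} : IsValue V → Step N N' → Step (.pair V N) (.pair V N')
  | lett_ctx {x y : ℕ} {M M' N : Tm} : Step M M' → Step (.lett x y M N) (.lett x y M' N)
  | ifz_ctx {M M' N P : Tm} : Step M M' → Step (.ifz M N P) (.ifz M' N P)
  | app_right {x : ℕ} {M N N' : Tm} : Step N N' →
      Step (.app (.abs x M) N) (.app (.abs x M) N')
  | app_left {M M' N : Tm} : Step M M' → Step (.app M N) (.app M' N)

/-- Many-step reduction. -/
def Steps : Tm → Tm → Prop := Relation.ReflTransGen Step

def NormalForm (M : Tm) : Prop := ¬ ∃ N, Step M N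

def Evaluates (M : Tm) : Prop := ∃ V, Steps M V ∧ IsValue V

/-- `M` diverges: it has no normal form. -/
def Diverges (M : Tm) : Prop := ¬ ∃ N, Steps M N ∧ NormalForm N

def Stuck (M : Tm) : Prop := NormalForm M ∧ ¬ IsValue M

def GoesWrong (M : Tm) : Prop := ∃ P, Steps M P ∧ Stuck P

/-- `div` = `fix x. x`. -/
def divTm : Tm := .fix 0 (.var 0)

/-- `P ≲ N`: if `P` reduces to a normal form then `N` reduces to the same
normal form. -/
def RefBelow (P N : Tm) : Prop := ∀ R, Steps P R → NormalForm R → Steps N R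

/-- Fixpoint approximants. -/
def fixApprox (x : ℕ) (M : Tm) : ℕ → Tm
  | 0 => divTm
  | n + 1 => subst x (fixApprox x M n) M

/-- Finitely verifiable types. -/
inductive FTy : Type
  | nat : FTy
  | prod : FTy → FTy → FTy
  deriving DecidableEq

/-- Types: `Nat | A×B | A→B | A⇝F | Ok` (necessity arrows only to finitely
verifiable types). -/
inductive Ty : Type
  | nat : Ty
  | prod : Ty → Ty → Ty
  | arrow : Ty → Ty → Ty
  | narrow : Ty → FTy → Ty
  | ok : Ty
  deriving DecidableEq

/-- Inclusion of finitely verifiable types into types. -/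
def FTy.toTy : FTy → Ty
  | .nat => .nat
  | .prod A B => .prod A.toTy B.toTy

/-- `T⟦·⟧` applied to a set of values: the terms that evaluate into it. -/
def TSem (Sv : Tm → Prop) (M : Tm) : Prop :=
  ClosedTm M ∧ ∃ V, Steps M V ∧ IsValue V ∧ Sv V

/-- `T̄⟦·⟧`: evaluate into the set, or diverge. -/
def TBarSem (Sv : Tm → Prop) (M : Tm) : Prop :=
  TSem Sv M ∨ (ClosedTm M ∧ Diverges M)

/-- Semantics of finitely verifiable types. -/
def FSem : FTy → Tm → Prop
  | .nat => fun M => ∃ n, M = numeral n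
  | .prod A B => fun M => ∃ V W, M = .pair V W ∧ FSem A V ∧ FSem B W

/-- Semantics of types, as sets of closed values. -/
def Sem : Ty → Tm → Prop
  | .nat => fun M => ∃ n, M = numeral n
  | .prod A B => fun M => ∃ V W, M = .pair V W ∧ Sem A V ∧ Sem B W
  | .arrow A B => fun M => ∃ x P, M = .abs x P ∧ ClosedTm M ∧
      ∀ V, ClosedTm V → IsValue V → Sem A V → TBarSem (Sem B) (subst x V P)
  | .narrow A F => fun M => ∃ x P, M = .abs x P ∧ ClosedTm M ∧
      ∀ V, ClosedTm V → IsValue V → TSem (FSem F) (subst x V P) → Sem A V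
  | .ok => fun M => ClosedTm M ∧ IsValue M

/-- Typing formulas `M : A`. -/
structure Formula where
  tm : Tm
  ty : Ty
  deriving DecidableEq

/-- Make a formula. -/
def fm (M : Tm) (A : Ty) : Formula := ⟨M, A⟩

/-- `x` does not occur free in any formula of `Γ`. -/
def FreshFor (x : ℕ) (Γ : Finset Formula) : Prop := ∀ φ ∈ Γ, x ∉ fv φ.tm

def IsArrowTy (A : Ty) : Prop :=
  (∃ B C, A = .arrow B C) ∨ (∃ B F, A = .narrow B F)

def IsProdTy (A : Ty) : Prop := ∃ B C, A = .prod B C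

/-- Disjointness of types: one is `Nat` and the other is not, or one is an
arrow and the other is not, or one is a product and the other is not. -/
def Disj (A B : Ty) : Prop :=
  (A = .nat ∧ B ≠ .nat) ∨ (B = .nat ∧ A ≠ .nat) ∨
  (IsArrowTy A ∧ ¬ IsArrowTy B) ∨ (IsArrowTy B ∧ ¬ IsArrowTy A) ∨
  (IsProdTy A ∧ ¬ IsProdTy B) ∨ (IsProdTy B ∧ ¬ IsProdTy A)

/-- The two-sided type system (including the `Ok` rules). -/
inductive Der : Finset Formula → Finset Formula → Prop
  | id (Γ Δ : Finset Formula) (x : ℕ) (A : Ty) :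
      Der (insert (fm (.var x) A) Γ) (insert (fm (.var x) A) Δ)
  | dis {Γ Δ : Finset Formula} {M : Tm} {A B : Ty} :
      Disj A B → Der Γ (insert (fm M B) Δ) → Der (insert (fm M A) Γ) Δ
  | zeroR (Γ Δ : Finset Formula) : Der Γ (insert (fm .zero .nat) Δ)
  | succR {Γ Δ M} : Der Γ (insert (fm M .nat) Δ) → Der Γ (insert (fm (.succ M) .nat) Δ)
  | predR {Γ Δ M} : Der Γ (insert (fm M .nat) Δ) → Der Γ (insert (fm (.pred M) .nat) Δ)
  | letR {Γ Δ : Finset Formula} {x y : ℕ} {M N : Tm} {A B C : Ty} :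
      Der Γ (insert (fm M (.prod B C)) Δ) →
      Der (insert (fm (.var x) B) (insert (fm (.var y) C) Γ)) (insert (fm N A) Δ) →
      FreshFor x Γ → FreshFor x Δ → FreshFor y Γ → FreshFor y Δ →
      Der Γ (insert (fm (.lett x y M N) A) Δ)
  | appR {Γ Δ M N A B} :
      Der Γ (insert (fm M (.arrow B A)) Δ) → Der Γ (insert (fm N B) Δ) →
      Der Γ (insert (fm (.app M N) A) Δ)
  | pairR {Γ Δ M N A B} :
      Der Γ (insert (fm M A) Δ) → Der Γ (insert (fm N B) Δ) →
      Der Γ (insert (fm (.pair M N) (.prod A B)) Δ)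
  | absR {Γ Δ : Finset Formula} {x : ℕ} {M : Tm} {A B : Ty} :
      Der (insert (fm (.var x) B) Γ) (insert (fm M A) Δ) →
      FreshFor x Γ → FreshFor x Δ →
      Der Γ (insert (fm (.abs x M) (.arrow B A)) Δ)
  | abnR {Γ Δ : Finset Formula} {x : ℕ} {M : Tm} {B : Ty} {F : FTy} :
      Der (insert (fm M F.toTy) Γ) (insert (fm (.var x) B) Δ) →
      FreshFor x Γ → FreshFor x Δ →
      Der Γ (insert (fm (.abs x M) (.narrow B F)) Δ)
  | fixR {Γ Δ : Finset Formula} {x : ℕ} {M : Tm} {A : Ty} :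
      Der (insert (fm (.var x) A) Γ) (insert (fm M A) Δ) →
      FreshFor x Γ → FreshFor x Δ →
      Der Γ (insert (fm (.fix x M) A) Δ)
  | ifzR {Γ Δ M N P A} :
      Der Γ (insert (fm M .nat) Δ) → Der Γ (insert (fm N A) Δ) →
      Der Γ (insert (fm P A) Δ) →
      Der Γ (insert (fm (.ifz M N P) A) Δ)
  | succL {Γ Δ M} : Der (insert (fm M .nat) Γ) Δ → Der (insert (fm (.succ M) .nat) Γ) Δ
  | predL {Γ Δ M} : Der (insert (fm M .nat) Γ) Δ → Der (insert (fm (.pred M) .nat) Γ) Δ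
  | appL {Γ Δ : Finset Formula} {M N : Tm} {B : Ty} {A : FTy} :
      Der Γ (insert (fm M (.narrow B A)) Δ) → Der (insert (fm N B) Γ) Δ →
      Der (insert (fm (.app M N) A.toTy) Γ) Δ
  | pairL1 {Γ Δ M1 M2 A1 A2} : Der (insert (fm M1 A1) Γ) Δ →
      Der (insert (fm (.pair M1 M2) (.prod A1 A2)) Γ) Δ
  | pairL2 {Γ Δ M1 M2 A1 A2} : Der (insert (fm M2 A2) Γ) Δ →
      Der (insert (fm (.pair M1 M2) (.prod A1 A2)) Γ) Δ
  | letL1 {Γ Δ : Finset Formula} {x y : ℕ} {M N : Tm} {A : Ty} :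
      Der (insert (fm N A) Γ) Δ →
      FreshFor x Γ → FreshFor x Δ → FreshFor y Γ → FreshFor y Δ →
      Der (insert (fm (.lett x y M N) A) Γ) Δ
  | letL2 {Γ Δ : Finset Formula} {x y : ℕ} {M N : Tm} {A B1 B2 : Ty} :
      Der (insert (fm M (.prod B1 B2)) Γ) Δ →
      Der (insert (fm N A) Γ) (insert (fm (.var x) B1) Δ) →
      Der (insert (fm N A) Γ) (insert (fm (.var y) B2) Δ) →
      FreshFor x Γ → FreshFor x Δ → FreshFor y Γ → FreshFor y Δ →
      Der (insert (fm (.lett x y M N) A) Γ) Δ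
  | ifzL1 {Γ Δ M N P A} : Der (insert (fm M .nat) Γ) Δ →
      Der (insert (fm (.ifz M N P) A) Γ) Δ
  | ifzL2 {Γ Δ M N P A} : Der (insert (fm N A) Γ) Δ → Der (insert (fm P A) Γ) Δ →
      Der (insert (fm (.ifz M N P) A) Γ) Δ
  | okVarR (Γ Δ : Finset Formula) (x : ℕ) : Der Γ (insert (fm (.var x) .ok) Δ)
  | okL {Γ Δ M A} : Der (insert (fm M .ok) Γ) Δ → Der (insert (fm M A) Γ) Δ
  | okR {Γ Δ M A} : Der Γ (insert (fm M A) Δ) → Der Γ (insert (fm M .ok) Δ)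
  | okApL1 {Γ Δ M N A} : Der (insert (fm M (.narrow .ok A)) Γ) Δ →
      Der (insert (fm (.app M N) .ok) Γ) Δ
  | okApL2 {Γ Δ M N} : Der (insert (fm N .ok) Γ) Δ → Der (insert (fm (.app M N) .ok) Γ) Δ
  | okSL {Γ Δ M} : Der (insert (fm M .nat) Γ) Δ → Der (insert (fm (.succ M) .ok) Γ) Δ
  | okPL {Γ Δ M} : Der (insert (fm M .nat) Γ) Δ → Der (insert (fm (.pred M) .ok) Γ) Δ
  | okPrL1 {Γ Δ M1 M2} : Der (insert (fm M1 .ok) Γ) Δ →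
      Der (insert (fm (.pair M1 M2) .ok) Γ) Δ
  | okPrL2 {Γ Δ M1 M2} : Der (insert (fm M2 .ok) Γ) Δ →
      Der (insert (fm (.pair M1 M2) .ok) Γ) Δ

/-- Simultaneous substitution by a valuation (total substitution); suitable
since valuations map variables to closed terms. -/
def msubst (θ : ℕ → Tm) : Tm → Tm
  | .var y => θ y
  | .zero => .zero
  | .succ M => .succ (msubst θ M)
  | .pred M => .pred (msubst θ M)
  | .ifz M P Q => .ifz (msubst θ M) (msubst θ P) (msubst θ Q)
  | .abs y M => .abs y (msubst (Function.update θ y (.var y)) M)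
  | .app M P => .app (msubst θ M) (msubst θ P)
  | .fix y M => .fix y (msubst (Function.update θ y (.var y)) M)
  | .pair M P => .pair (msubst θ M) (msubst θ P)
  | .lett y z M P =>
      .lett y z (msubst θ M)
        (msubst (Function.update (Function.update θ y (.var y)) z (.var z)) P)

/-- A valuation: a substitution by closed terms. -/
def ClosedVal (θ : ℕ → Tm) : Prop := ∀ x, ClosedTm (θ x)

/-- `θ` satisfies `M : A` on the left: `Mθ ∈ T⟦A⟧`. -/
def SatL (θ : ℕ → Tm) (φ : Formula) : Prop := TSem (Sem φ.ty) (msubst θ φ.tm)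

/-- `θ` satisfies `M : A` on the right: `Mθ ∈ T̄⟦A⟧`. -/
def SatR (θ : ℕ → Tm) (φ : Formula) : Prop := TBarSem (Sem φ.ty) (msubst θ φ.tm)

/-- Truth of a judgement: `Γ ⊨ Δ`. -/
def Models (Γ Δ : Finset Formula) : Prop :=
  ∀ θ : ℕ → Tm, ClosedVal θ → (∀ φ ∈ Γ, SatL θ φ) → ∃ φ ∈ Δ, SatR θ φ


/-- `M` gets stuck: it reduces to a normal form that is not a value. -/
def GetsStuck (M : Tm) : Prop := ∃ R, Steps M R ∧ Stuck R

/-! ### Auxiliary development for Statement 10 -/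

section Aux

lemma numeral_nostep : ∀ (n : ℕ) {X : Tm}, ¬ Step (numeral n) X := by
  intro n
  induction n with
  | zero => intro X h; cases h
  | succ n ih =>
    intro X h
    cases h with
    | succ_ctx h => exact ih h

lemma value_nostep {V X : Tm} (hV : IsValue V) : ¬ Step V X := by
  induction hV generalizing X with
  | var x => intro h; cases h
  | num n => exact numeral_nostep n
  | pair hV hW ihV ihW =>
    intro h
    cases h with
    | pair_left h => exact ihV h
    | pair_right _ h => exact ihW h
  | abs x M => intro h; cases h

lemma numeral_inj : ∀ {m n : ℕ}, numeral m = numeral n → m = n := by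
  intro m
  induction m with
  | zero => intro n h; cases n with
    | zero => rfl
    | succ n => simp [numeral] at h
  | succ m ih =>
    intro n h
    cases n with
    | zero => simp [numeral] at h
    | succ n =>
      simp only [numeral, Tm.succ.injEq] at h
      rw [ih h]

lemma value_nf {V : Tm} (hV : IsValue V) : NormalForm V := by
  rintro ⟨X, hX⟩; exact value_nostep hV hX

lemma step_det {A B C : Tm} (h1 : Step A B) (h2 : Step A C) : B = C := by
  induction h1 generalizing C with
  | ifz_zero =>
    cases h2 with
    | ifz_zero => rfl
    | ifz_ctx h => exact absurd h (numeral_nostep 0)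
  | ifz_succ =>
    generalize hq : numeral (_ + 1) = q at h2
    cases h2 with
    | ifz_zero => exact absurd (numeral_inj hq) (by omega)
    | ifz_succ => rfl
    | ifz_ctx h => rw [← hq] at h; exact absurd h (numeral_nostep _)
  | lett_beta hV hW =>
    cases h2 with
    | lett_beta => rfl
    | lett_ctx h => exact absurd h (value_nostep (IsValue.pair hV hW))
  | fix_step => cases h2 with | fix_step => rfl
  | pred_zero =>
    cases h2 with
    | pred_zero => rfl
    | pred_ctx h => exact absurd h (numeral_nostep 0)
  | @pred_succ n =>
    generalize hq : numeral (n + 1) = q at h2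
    cases h2 with
    | pred_zero => exact absurd (numeral_inj hq) (by omega)
    | @pred_succ m =>
      obtain rfl : n = m := by have := numeral_inj hq; omega
      rfl
    | pred_ctx h => rw [← hq] at h; exact absurd h (numeral_nostep _)
  | beta hV =>
    cases h2 with
    | beta => rfl
    | app_right h => exact absurd h (value_nostep hV)
    | app_left h => cases h
  | succ_ctx h ih =>
    cases h2 with
    | succ_ctx h2 => rw [ih h2]
  | pred_ctx h ih =>
    cases h2 with
    | pred_zero => exact absurd h (numeral_nostep 0)
    | pred_succ => exact absurd h (numeral_nostep _)
    | pred_ctx h2 => rw [ih h2]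
  | pair_left h ih =>
    cases h2 with
    | pair_left h2 => rw [ih h2]
    | pair_right hV h2 => exact absurd h (value_nostep hV)
  | pair_right hV h ih =>
    cases h2 with
    | pair_left h2 => exact absurd h2 (value_nostep hV)
    | pair_right _ h2 => rw [ih h2]
  | lett_ctx h ih =>
    cases h2 with
    | lett_beta hV hW => exact absurd h (value_nostep (IsValue.pair hV hW))
    | lett_ctx h2 => rw [ih h2]
  | ifz_ctx h ih =>
    cases h2 with
    | ifz_zero => exact absurd h (numeral_nostep 0)
    | ifz_succ => exact absurd h (numeral_nostep _)
    | ifz_ctx h2 => rw [ih h2]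
  | app_right h ih =>
    cases h2 with
    | beta hV => exact absurd h (value_nostep hV)
    | app_right h2 => rw [ih h2]
    | app_left h2 => cases h2
  | app_left h ih =>
    cases h2 with
    | beta => cases h
    | app_right => cases h
    | app_left h2 => rw [ih h2]

lemma nf_unique {A R : Tm} (h1 : Steps A R) (hR : NormalForm R) :
    ∀ {W : Tm}, Steps A W → NormalForm W → R = W := by
  induction h1 using Relation.ReflTransGen.head_induction_on with
  | refl =>
    intro W h2 hW
    rcases (Relation.ReflTransGen.cases_head h2) with rfl | ⟨c, hc, _⟩
    · rfl
    · exact absurd ⟨_, hc⟩ hR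
  | head hstep _ ih =>
    intro W h2 hW
    rcases (Relation.ReflTransGen.cases_head h2) with rfl | ⟨c, hc, hcW⟩
    · exact absurd ⟨_, hstep⟩ hW
    · rw [step_det hstep hc] at *
      exact ih hcW hW

/-! Context lifting for `Steps`. -/

lemma steps_succ {M M' : Tm} (h : Steps M M') : Steps (.succ M) (.succ M') :=
  Relation.ReflTransGen.lift Tm.succ (fun _ _ => Step.succ_ctx) _ _ h

lemma steps_pred {M M' : Tm} (h : Steps M M') : Steps (.pred M) (.pred M') :=
  Relation.ReflTransGen.lift Tm.pred (fun _ _ => Step.pred_ctx) _ _ h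

lemma steps_pair_left {M M' N : Tm} (h : Steps M M') : Steps (.pair M N) (.pair M' N) :=
  Relation.ReflTransGen.lift (fun t => Tm.pair t N) (fun _ _ => Step.pair_left) _ _ h

lemma steps_pair_right {V N N' : Tm} (hV : IsValue V) (h : Steps N N') :
    Steps (.pair V N) (.pair V N') :=
  Relation.ReflTransGen.lift (fun t => Tm.pair V t) (fun _ _ => Step.pair_right hV) _ _ h

lemma steps_lett {x y : ℕ} {M M' N : Tm} (h : Steps M M') :
    Steps (.lett x y M N) (.lett x y M' N) :=
  Relation.ReflTransGen.lift (fun t => Tm.lett x y t N) (fun _ _ => Step.lett_ctx) _ _ h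

lemma steps_ifz {M M' N P : Tm} (h : Steps M M') : Steps (.ifz M N P) (.ifz M' N P) :=
  Relation.ReflTransGen.lift (fun t => Tm.ifz t N P) (fun _ _ => Step.ifz_ctx) _ _ h

lemma steps_app_left {M M' N : Tm} (h : Steps M M') : Steps (.app M N) (.app M' N) :=
  Relation.ReflTransGen.lift (fun t => Tm.app t N) (fun _ _ => Step.app_left) _ _ h

lemma steps_app_right {x : ℕ} {M N N' : Tm} (h : Steps N N') :
    Steps (.app (.abs x M) N) (.app (.abs x M) N') :=
  Relation.ReflTransGen.lift (fun t => Tm.app (.abs x M) t) (fun _ _ => Step.app_right) _ _ h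

/-! Free variables and substitution. -/

lemma numeral_fv (n : ℕ) : fv (numeral n) = ∅ := by
  induction n with
  | zero => rfl
  | succ n ih => simpa [numeral, fv] using ih

lemma subst_fv (x : ℕ) (N M : Tm) : fv (subst x N M) ⊆ (fv M \ {x}) ∪ fv N := by
  induction M with
  | var y =>
    by_cases h : y = x <;> simp [subst, fv, h]
  | zero => simp [subst, fv]
  | succ M ih => simpa [subst, fv] using ih
  | pred M ih => simpa [subst, fv] using ih
  | ifz M P Q ihM ihP ihQ =>
    intro a ha
    simp only [subst, fv, Finset.mem_union] at ha
    rcases ha with (ha | ha) | ha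
    · have := ihM ha; simp only [Finset.mem_union, Finset.mem_sdiff, fv] at *; tauto
    · have := ihP ha; simp only [Finset.mem_union, Finset.mem_sdiff, fv] at *; tauto
    · have := ihQ ha; simp only [Finset.mem_union, Finset.mem_sdiff, fv] at *; tauto
  | abs y M ih =>
    by_cases h : y = x
    · simp [subst, h, fv]
    · intro a ha
      simp only [subst, h, if_false, fv, Finset.mem_sdiff, Finset.mem_singleton] at ha
      have := ih ha.1
      simp only [Finset.mem_union, Finset.mem_sdiff, Finset.mem_singleton, fv] at *
      tauto
  | app M P ihM ihP =>
    intro a ha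
    simp only [subst, fv, Finset.mem_union] at ha
    rcases ha with ha | ha
    · have := ihM ha; simp only [Finset.mem_union, Finset.mem_sdiff, fv] at *; tauto
    · have := ihP ha; simp only [Finset.mem_union, Finset.mem_sdiff, fv] at *; tauto
  | fix y M ih =>
    by_cases h : y = x
    · simp [subst, h, fv]
    · intro a ha
      simp only [subst, h, if_false, fv, Finset.mem_sdiff, Finset.mem_singleton] at ha
      have := ih ha.1
      simp only [Finset.mem_union, Finset.mem_sdiff, Finset.mem_singleton, fv] at *
      tauto
  | pair M P ihM ihP =>
    intro a ha
    simp only [subst, fv, Finset.mem_union] at ha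
    rcases ha with ha | ha
    · have := ihM ha; simp only [Finset.mem_union, Finset.mem_sdiff, fv] at *; tauto
    · have := ihP ha; simp only [Finset.mem_union, Finset.mem_sdiff, fv] at *; tauto
  | lett y w M Q ihM ihQ =>
    intro a ha
    by_cases h : y = x ∨ w = x
    · simp only [subst, if_pos h, fv, Finset.mem_union] at ha
      rcases ha with ha | ha
      · have := ihM ha
        simp only [Finset.mem_union, Finset.mem_sdiff, Finset.mem_singleton,
          Finset.mem_insert, fv] at *
        tauto
      · simp only [Finset.mem_union, Finset.mem_sdiff, Finset.mem_singleton,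
          Finset.mem_insert, fv] at ha ⊢
        have hax : a ≠ x := by
          rcases h with rfl | rfl
          · exact fun hh => ha.2 (Or.inl hh)
          · exact fun hh => ha.2 (Or.inr hh)
        tauto
    · simp only [subst, if_neg h, fv, Finset.mem_union] at ha
      rcases ha with ha | ha
      · have := ihM ha
        simp only [Finset.mem_union, Finset.mem_sdiff, Finset.mem_singleton,
          Finset.mem_insert, fv] at *
        tauto
      · simp only [Finset.mem_sdiff, Finset.mem_insert, Finset.mem_singleton] at ha
        have := ihQ ha.1
        simp only [Finset.mem_union, Finset.mem_sdiff, Finset.mem_singleton,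
          Finset.mem_insert, fv] at *
        tauto

lemma step_fv {A B : Tm} (h : Step A B) : fv B ⊆ fv A := by
  induction h with
  | ifz_zero => simp [fv, numeral]
  | ifz_succ => intro a ha; simp only [fv, Finset.mem_union]; tauto
  | lett_beta hV hW =>
    intro a ha
    have h1 := subst_fv _ _ _ ha
    simp only [Finset.mem_union, Finset.mem_sdiff, Finset.mem_singleton] at h1
    rcases h1 with ⟨h1, hy⟩ | h1
    · have h2 := subst_fv _ _ _ h1
      simp only [Finset.mem_union, Finset.mem_sdiff, Finset.mem_singleton, fv,
        Finset.mem_insert] at h2 ⊢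
      tauto
    · simp only [fv, Finset.mem_union]; tauto
  | fix_step =>
    intro a ha
    have h1 := subst_fv _ _ _ ha
    simp only [Finset.mem_union, Finset.mem_sdiff, Finset.mem_singleton, fv] at h1 ⊢
    tauto
  | pred_zero => simp [fv]
  | pred_succ =>
    simp only [numeral_fv, fv]
    exact Finset.Subset.refl _
  | beta hV =>
    intro a ha
    have h1 := subst_fv _ _ _ ha
    simp only [Finset.mem_union, Finset.mem_sdiff, Finset.mem_singleton, fv] at h1 ⊢
    tauto
  | succ_ctx _ ih => simpa [fv] using ih
  | pred_ctx _ ih => simpa [fv] using ih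
  | pair_left _ ih =>
    intro a ha
    simp only [fv, Finset.mem_union] at ha ⊢
    tauto
  | pair_right _ _ ih =>
    intro a ha
    simp only [fv, Finset.mem_union] at ha ⊢
    tauto
  | lett_ctx _ ih =>
    intro a ha
    simp only [fv, Finset.mem_union] at ha ⊢
    tauto
  | ifz_ctx _ ih =>
    intro a ha
    simp only [fv, Finset.mem_union] at ha ⊢
    tauto
  | app_right _ ih =>
    intro a ha
    simp only [fv, Finset.mem_union] at ha ⊢
    tauto
  | app_left _ ih =>
    intro a ha
    simp only [fv, Finset.mem_union] at ha ⊢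
    tauto

lemma steps_closed {A B : Tm} (hA : ClosedTm A) (h : Steps A B) : ClosedTm B := by
  induction h with
  | refl => exact hA
  | tail _ hstep ih =>
    have := step_fv hstep
    unfold ClosedTm at *
    rw [ih] at this
    exact Finset.subset_empty.mp this

lemma subst_of_not_mem {x : ℕ} {Q : Tm} (hx : x ∉ fv Q) (a : Tm) : subst x a Q = Q := by
  induction Q with
  | var y =>
    simp only [fv, Finset.mem_singleton] at hx
    simp [subst, Ne.symm hx]
  | zero => rfl
  | succ M ih => simp only [fv] at hx; simp [subst, ih hx]
  | pred M ih => simp only [fv] at hx; simp [subst, ih hx]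
  | ifz M P Q ihM ihP ihQ =>
    simp only [fv, Finset.mem_union, not_or] at hx
    simp [subst, ihM hx.1.1, ihP hx.1.2, ihQ hx.2]
  | abs y M ih =>
    by_cases h : y = x
    · simp [subst, h]
    · simp only [fv, Finset.mem_sdiff, Finset.mem_singleton, not_and, not_not] at hx
      have : x ∉ fv M := fun hm => h (hx hm).symm
      simp [subst, h, ih this]
  | app M P ihM ihP =>
    simp only [fv, Finset.mem_union, not_or] at hx
    simp [subst, ihM hx.1, ihP hx.2]
  | fix y M ih =>
    by_cases h : y = x
    · simp [subst, h]
    · simp only [fv, Finset.mem_sdiff, Finset.mem_singleton, not_and, not_not] at hx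
      have : x ∉ fv M := fun hm => h (hx hm).symm
      simp [subst, h, ih this]
  | pair M P ihM ihP =>
    simp only [fv, Finset.mem_union, not_or] at hx
    simp [subst, ihM hx.1, ihP hx.2]
  | lett y w M Q ihM ihQ =>
    have hxM : x ∉ fv M := fun hm => hx (by simp only [fv, Finset.mem_union]; tauto)
    by_cases h : y = x ∨ w = x
    · simp [subst, h, ihM hxM]
    · have hxQ : x ∉ fv Q := by
        intro hq
        apply hx
        simp only [fv, Finset.mem_union, Finset.mem_sdiff, Finset.mem_insert,
          Finset.mem_singleton]
        exact Or.inr ⟨hq, by omega⟩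
      simp [subst, h, ihM hxM, ihQ hxQ]

lemma subst_of_closed {x : ℕ} {Q : Tm} (hQ : ClosedTm Q) (a : Tm) : subst x a Q = Q :=
  subst_of_not_mem (by rw [show fv Q = ∅ from hQ]; exact Finset.notMem_empty x) a

/-! The simulation relation. -/

inductive Rel (P N : Tm) : Tm → Tm → Prop
  | base {Q : Tm} : Steps P Q → Rel P N Q N
  | var (x : ℕ) : Rel P N (.var x) (.var x)
  | zero : Rel P N .zero .zero
  | succ {M M'} : Rel P N M M' → Rel P N (.succ M) (.succ M')
  | pred {M M'} : Rel P N M M' → Rel P N (.pred M) (.pred M')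
  | ifz {M M' Q Q' R R'} : Rel P N M M' → Rel P N Q Q' → Rel P N R R' →
      Rel P N (.ifz M Q R) (.ifz M' Q' R')
  | abs (x : ℕ) {M M'} : Rel P N M M' → Rel P N (.abs x M) (.abs x M')
  | app {M M' Q Q'} : Rel P N M M' → Rel P N Q Q' → Rel P N (.app M Q) (.app M' Q')
  | fix (x : ℕ) {M M'} : Rel P N M M' → Rel P N (.fix x M) (.fix x M')
  | pair {M M' Q Q'} : Rel P N M M' → Rel P N Q Q' → Rel P N (.pair M Q) (.pair M' Q')
  | lett (x y : ℕ) {M M' Q Q'} : Rel P N M M' → Rel P N Q Q' →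
      Rel P N (.lett x y M Q) (.lett x y M' Q')

lemma rel_refl (P N : Tm) : ∀ M, Rel P N M M := by
  intro M
  induction M with
  | var x => exact Rel.var x
  | zero => exact Rel.zero
  | succ M ih => exact Rel.succ ih
  | pred M ih => exact Rel.pred ih
  | ifz M Q R ih1 ih2 ih3 => exact Rel.ifz ih1 ih2 ih3
  | abs x M ih => exact Rel.abs x ih
  | app M Q ih1 ih2 => exact Rel.app ih1 ih2
  | fix x M ih => exact Rel.fix x ih
  | pair M Q ih1 ih2 => exact Rel.pair ih1 ih2
  | lett x y M Q ih1 ih2 => exact Rel.lett x y ih1 ih2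

section Sim

variable {P N : Tm}

lemma rel_subst (hP : ClosedTm P) (hN : ClosedTm N) (x : ℕ) {a a' m m' : Tm} (ha : Rel P N a a') (hm : Rel P N m m') :
    Rel P N (subst x a m) (subst x a' m') := by
  induction hm with
  | base hQ =>
    rw [subst_of_closed (steps_closed hP hQ), subst_of_closed hN]
    exact Rel.base hQ
  | var y =>
    by_cases h : y = x
    · simpa [subst, h] using ha
    · simpa [subst, h] using Rel.var (P := P) (N := N) y
  | zero => exact Rel.zero
  | succ _ ih => exact Rel.succ ih
  | pred _ ih => exact Rel.pred ih
  | ifz _ _ _ ih1 ih2 ih3 => exact Rel.ifz ih1 ih2 ih3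
  | abs y h ih =>
    by_cases hyx : y = x
    · simpa [subst, hyx] using Rel.abs y h
    · simpa [subst, hyx] using Rel.abs y ih
  | app _ _ ih1 ih2 => exact Rel.app ih1 ih2
  | fix y h ih =>
    by_cases hyx : y = x
    · simpa [subst, hyx] using Rel.fix y h
    · simpa [subst, hyx] using Rel.fix y ih
  | pair _ _ ih1 ih2 => exact Rel.pair ih1 ih2
  | lett y w h1 h2 ih1 ih2 =>
    by_cases h : y = x ∨ w = x
    · simpa [subst, h] using Rel.lett y w ih1 h2
    · simpa [subst, h] using Rel.lett y w ih1 ih2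

lemma rel_numeral (hle : RefBelow P N) : ∀ (n : ℕ) {B : Tm}, Rel P N (numeral n) B → Steps B (numeral n) := by
  intro n
  induction n with
  | zero =>
    intro B h
    cases h with
    | base hQ => exact hle _ hQ (value_nf (IsValue.num 0))
    | zero => exact Relation.ReflTransGen.refl
  | succ n ih =>
    intro B h
    cases h with
    | base hQ => exact hle _ hQ (value_nf (IsValue.num (n + 1)))
    | succ h => exact steps_succ (ih h)

lemma rel_value (hle : RefBelow P N) {V B : Tm} (hV : IsValue V) (h : Rel P N V B) :
    ∃ W, Steps B W ∧ IsValue W ∧ Rel P N V W := by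
  induction hV generalizing B with
  | var x =>
    cases h with
    | base hQ =>
      exact ⟨.var x, hle _ hQ (value_nf (IsValue.var x)), IsValue.var x, Rel.var x⟩
    | var => exact ⟨.var x, Relation.ReflTransGen.refl, IsValue.var x, Rel.var x⟩
  | num n =>
    exact ⟨numeral n, rel_numeral hle n h, IsValue.num n, rel_refl P N _⟩
  | pair hV1 hV2 ih1 ih2 =>
    cases h with
    | base hQ =>
      exact ⟨_, hle _ hQ (value_nf (IsValue.pair hV1 hV2)), IsValue.pair hV1 hV2,
        rel_refl P N _⟩
    | pair h1 h2 =>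
      obtain ⟨W1, hs1, hW1, hr1⟩ := ih1 h1
      obtain ⟨W2, hs2, hW2, hr2⟩ := ih2 h2
      exact ⟨.pair W1 W2, (steps_pair_left hs1).trans (steps_pair_right hW1 hs2),
        IsValue.pair hW1 hW2, Rel.pair hr1 hr2⟩
  | abs x M =>
    cases h with
    | base hQ =>
      exact ⟨.abs x M, hle _ hQ (value_nf (IsValue.abs x M)), IsValue.abs x M,
        rel_refl P N _⟩
    | abs _ hm => exact ⟨_, Relation.ReflTransGen.refl, IsValue.abs x _, Rel.abs x hm⟩

lemma rel_pair_value (hle : RefBelow P N) {V W B : Tm} (hV : IsValue V) (hW : IsValue W)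
    (h : Rel P N (.pair V W) B) :
    ∃ V' W', IsValue V' ∧ IsValue W' ∧ Steps B (.pair V' W') ∧
      Rel P N V V' ∧ Rel P N W W' := by
  cases h with
  | base hQ =>
    exact ⟨V, W, hV, hW, hle _ hQ (value_nf (IsValue.pair hV hW)),
      rel_refl P N _, rel_refl P N _⟩
  | pair h1 h2 =>
    obtain ⟨V', hs1, hV', hr1⟩ := rel_value hle hV h1
    obtain ⟨W', hs2, hW', hr2⟩ := rel_value hle hW h2
    exact ⟨V', W', hV', hW', (steps_pair_left hs1).trans (steps_pair_right hV' hs2),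
      hr1, hr2⟩

lemma rel_abs (hle : RefBelow P N) {x : ℕ} {M B : Tm} (h : Rel P N (.abs x M) B) :
    ∃ M', Steps B (.abs x M') ∧ Rel P N M M' := by
  cases h with
  | base hQ =>
    exact ⟨M, hle _ hQ (value_nf (IsValue.abs x M)), rel_refl P N _⟩
  | abs _ hm => exact ⟨_, Relation.ReflTransGen.refl, hm⟩

lemma rel_step (hP : ClosedTm P) (hN : ClosedTm N) (hle : RefBelow P N) {A A' B : Tm} (hstep : Step A A') (h : Rel P N A B) :
    ∃ B', Steps B B' ∧ Rel P N A' B' := by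
  induction hstep generalizing B with
  | @ifz_zero Q R =>
    cases h with
    | base hQ => exact ⟨N, Relation.ReflTransGen.refl, Rel.base (hQ.tail Step.ifz_zero)⟩
    | ifz h1 h2 h3 =>
      exact ⟨_, (steps_ifz (rel_numeral hle 0 h1)).tail Step.ifz_zero, h2⟩
  | ifz_succ =>
    cases h with
    | base hQ => exact ⟨N, Relation.ReflTransGen.refl, Rel.base (hQ.tail Step.ifz_succ)⟩
    | ifz h1 h2 h3 =>
      exact ⟨_, (steps_ifz (rel_numeral hle _ h1)).tail Step.ifz_succ, h3⟩
  | lett_beta hV hW =>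
    cases h with
    | base hQ =>
      exact ⟨N, Relation.ReflTransGen.refl, Rel.base (hQ.tail (Step.lett_beta hV hW))⟩
    | lett x y h1 h2 =>
      obtain ⟨V', W', hV', hW', hs, hr1, hr2⟩ := rel_pair_value hle hV hW h1
      exact ⟨_, (steps_lett hs).tail (Step.lett_beta hV' hW'),
        rel_subst hP hN _ hr2 (rel_subst hP hN _ hr1 h2)⟩
  | @fix_step x M0 =>
    cases h with
    | base hQ => exact ⟨N, Relation.ReflTransGen.refl, Rel.base (hQ.tail Step.fix_step)⟩
    | fix _ hm =>
      exact ⟨_, Relation.ReflTransGen.single Step.fix_step,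
        rel_subst hP hN _ (Rel.fix x hm) hm⟩
  | pred_zero =>
    cases h with
    | base hQ => exact ⟨N, Relation.ReflTransGen.refl, Rel.base (hQ.tail Step.pred_zero)⟩
    | pred h1 =>
      exact ⟨_, (steps_pred (rel_numeral hle 0 h1)).tail Step.pred_zero, rel_refl P N _⟩
  | pred_succ =>
    cases h with
    | base hQ => exact ⟨N, Relation.ReflTransGen.refl, Rel.base (hQ.tail Step.pred_succ)⟩
    | pred h1 =>
      exact ⟨_, (steps_pred (rel_numeral hle _ h1)).tail Step.pred_succ, rel_refl P N _⟩
  | @beta x M0 V hV =>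
    cases h with
    | base hQ =>
      exact ⟨N, Relation.ReflTransGen.refl, Rel.base (hQ.tail (Step.beta hV))⟩
    | app h1 h2 =>
      obtain ⟨M', hsM, hrM⟩ := rel_abs hle h1
      obtain ⟨W, hsW, hW, hrW⟩ := rel_value hle hV h2
      exact ⟨_, ((steps_app_left hsM).trans (steps_app_right hsW)).tail (Step.beta hW),
        rel_subst hP hN _ hrW hrM⟩
  | succ_ctx hst ih =>
    cases h with
    | base hQ => exact ⟨N, Relation.ReflTransGen.refl, Rel.base (hQ.tail (Step.succ_ctx hst))⟩
    | succ h1 =>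
      obtain ⟨B', hs, hr⟩ := ih h1
      exact ⟨_, steps_succ hs, Rel.succ hr⟩
  | pred_ctx hst ih =>
    cases h with
    | base hQ => exact ⟨N, Relation.ReflTransGen.refl, Rel.base (hQ.tail (Step.pred_ctx hst))⟩
    | pred h1 =>
      obtain ⟨B', hs, hr⟩ := ih h1
      exact ⟨_, steps_pred hs, Rel.pred hr⟩
  | pair_left hst ih =>
    cases h with
    | base hQ => exact ⟨N, Relation.ReflTransGen.refl, Rel.base (hQ.tail (Step.pair_left hst))⟩
    | pair h1 h2 =>
      obtain ⟨B', hs, hr⟩ := ih h1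
      exact ⟨_, steps_pair_left hs, Rel.pair hr h2⟩
  | pair_right hV hst ih =>
    cases h with
    | base hQ =>
      exact ⟨N, Relation.ReflTransGen.refl, Rel.base (hQ.tail (Step.pair_right hV hst))⟩
    | pair h1 h2 =>
      obtain ⟨W1, hsW, hW1, hrW⟩ := rel_value hle hV h1
      obtain ⟨B', hs, hr⟩ := ih h2
      exact ⟨_, (steps_pair_left hsW).trans (steps_pair_right hW1 hs),
        Rel.pair hrW hr⟩
  | lett_ctx hst ih =>
    cases h with
    | base hQ => exact ⟨N, Relation.ReflTransGen.refl, Rel.base (hQ.tail (Step.lett_ctx hst))⟩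
    | lett x y h1 h2 =>
      obtain ⟨B', hs, hr⟩ := ih h1
      exact ⟨_, steps_lett hs, Rel.lett _ _ hr h2⟩
  | ifz_ctx hst ih =>
    cases h with
    | base hQ => exact ⟨N, Relation.ReflTransGen.refl, Rel.base (hQ.tail (Step.ifz_ctx hst))⟩
    | ifz h1 h2 h3 =>
      obtain ⟨B', hs, hr⟩ := ih h1
      exact ⟨_, steps_ifz hs, Rel.ifz hr h2 h3⟩
  | @app_right x M0 _ _ hst ih =>
    cases h with
    | base hQ =>
      exact ⟨N, Relation.ReflTransGen.refl, Rel.base (hQ.tail (Step.app_right hst))⟩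
    | app h1 h2 =>
      obtain ⟨M', hsM, hrM⟩ := rel_abs hle h1
      obtain ⟨B', hs, hr⟩ := ih h2
      exact ⟨_, (steps_app_left hsM).trans (steps_app_right hs),
        Rel.app (Rel.abs x hrM) hr⟩
  | app_left hst ih =>
    cases h with
    | base hQ =>
      exact ⟨N, Relation.ReflTransGen.refl, Rel.base (hQ.tail (Step.app_left hst))⟩
    | app h1 h2 =>
      obtain ⟨B', hs, hr⟩ := ih h1
      exact ⟨_, steps_app_left hs, Rel.app hr h2⟩

lemma rel_steps (hP : ClosedTm P) (hN : ClosedTm N) (hle : RefBelow P N) {A A' B : Tm} (hsteps : Steps A A') (h : Rel P N A B) :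
    ∃ B', Steps B B' ∧ Rel P N A' B' := by
  induction hsteps with
  | refl => exact ⟨B, Relation.ReflTransGen.refl, h⟩
  | tail _ hstep ih =>
    obtain ⟨B', hs, hr⟩ := ih
    obtain ⟨B'', hs', hr'⟩ := rel_step hP hN hle hstep hr
    exact ⟨B'', hs.trans hs', hr'⟩

end Sim

end Aux

/-- Stuckness modulo substitution. -/
theorem stuck_under_subst (M N P : Tm) (z : ℕ)
    (hN : ClosedTm N) (hP : ClosedTm P) (hle : RefBelow P N)
    (h : GetsStuck (subst z N M)) :
    Diverges (subst z P M) ∨ GetsStuck (subst z P M) := by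
  by_cases hdiv : Diverges (subst z P M)
  · exact Or.inl hdiv
  · right
    unfold Diverges at hdiv
    push_neg at hdiv
    obtain ⟨R', hsR', hnfR'⟩ := hdiv
    by_cases hval : IsValue R'
    · exfalso
      obtain ⟨R, hsR, hRnf, hRnv⟩ := h
      have hrel : Rel P N (subst z P M) (subst z N M) :=
        rel_subst hP hN z (Rel.base Relation.ReflTransGen.refl) (rel_refl P N M)
      obtain ⟨B', hsB', hrB'⟩ := rel_steps hP hN hle hsR' hrel
      obtain ⟨W, hsW, hW, _⟩ := rel_value hle hval hrB'
      have hWnf : NormalForm W := value_nf hW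
      have : R = W := nf_unique hsR hRnf (hsB'.trans hsW) hWnf
      exact hRnv (this ▸ hW)
    · exact ⟨R', hsR', hnfR', hval⟩

end PCF
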